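/- arXiv:2201.07256 — 3 statements merged into one kernel-verified Lean document; each statement's English description precedes it below -/
import Mathlib

section
/- If the row space of F is contained in the row space of the observability matrix 𝒪 of (A,C), then for every eigenvalue λ of A (indeed every λ ∈ ℂ), rank[A − λI; C; F] = rank[A − λI; C]. -/
open Matrix

/-- The observability matrix `[C; CA; ...; CA^{n-1}]`. -/
noncomputable def obsMat {n q : ℕ} (A : Matrix (Fin n) (Fin n) ℂ)
    (C : Matrix (Fin q) (Fin n) ℂ) : Matrix (Fin n × Fin q) (Fin n) ℂ :=
  fun p k => (C * A ^ (p.1 : ℕ)) p.2 k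

lemma vecMul_mem_span_rows {m n : ℕ} (M : Matrix (Fin m) (Fin n) ℂ) (v : Fin m → ℂ) :
    v ᵥ* M ∈ Submodule.span ℂ (Set.range M) := by
  have hv : v ᵥ* M = ∑ i, v i • M i := by
    ext j
    simp [vecMul, dotProduct, Finset.sum_apply]
  rw [hv]
  exact Submodule.sum_mem _ fun i _ =>
    Submodule.smul_mem _ _ (Submodule.subset_span ⟨i, rfl⟩)

lemma range_fromRows_span {m₁ m₂ n : Type*} (X : Matrix m₁ n ℂ)
    (Y : Matrix m₂ n ℂ) :
    Submodule.span ℂ (Set.range (fromRows X Y)) =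
      Submodule.span ℂ (Set.range X) ⊔ Submodule.span ℂ (Set.range Y) := by
  rw [← Submodule.span_union]
  congr 1
  have : Set.range (fromRows X Y) = Set.range (Sum.elim X Y) := rfl
  rw [this]
  exact Set.Sum.elim_range X Y

theorem pbh_of_rowSpace_le {n q r : ℕ}
    (A : Matrix (Fin n) (Fin n) ℂ) (C : Matrix (Fin q) (Fin n) ℂ)
    (F : Matrix (Fin r) (Fin n) ℂ)
    (h : Submodule.span ℂ (Set.range F) ≤ Submodule.span ℂ (Set.range (obsMat A C))) :
    ∀ lam : ℂ,
      (fromRows (fromRows (A - lam • (1 : Matrix (Fin n) (Fin n) ℂ)) C) F).rank =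
        (fromRows (A - lam • (1 : Matrix (Fin n) (Fin n) ℂ)) C).rank := by
  intro lam
  set B := A - lam • (1 : Matrix (Fin n) (Fin n) ℂ) with hB
  set S := Submodule.span ℂ (Set.range (fromRows B C)) with hS
  -- S is closed under right-multiplication by A
  have hclosed : ∀ v : Fin n → ℂ, v ∈ S → v ᵥ* A ∈ S := by
    intro v hv
    have hA : v ᵥ* A = v ᵥ* B + lam • v := by
      ext j
      simp [hB, vecMul, dotProduct, Matrix.sub_apply, Matrix.smul_apply, Matrix.one_apply,
        mul_sub, Finset.sum_sub_distrib, mul_comm, Finset.mul_sum]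
    rw [hA]
    refine Submodule.add_mem _ ?_ (Submodule.smul_mem _ _ hv)
    have hsub : Submodule.span ℂ (Set.range B) ≤ S := by
      rw [hS, range_fromRows_span]
      exact le_sup_left
    exact hsub (vecMul_mem_span_rows B v)
  -- rows of C are in S
  have hCrow : ∀ i : Fin q, C i ∈ S := by
    intro i
    exact Submodule.subset_span ⟨Sum.inr i, rfl⟩
  -- rows of C * A^k are in S
  have hCA : ∀ (k : ℕ) (i : Fin q), (C * A ^ k) i ∈ S := by
    intro k
    induction k with
    | zero => simpa using hCrow
    | succ k ih =>
      intro i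
      have : (C * A ^ (k + 1)) i = ((C * A ^ k) i) ᵥ* A := by
        rw [pow_succ, ← Matrix.mul_assoc, Matrix.mul_apply_eq_vecMul]
      rw [this]
      exact hclosed _ (ih i)
  -- hence rows of obsMat are in S
  have hObs : Submodule.span ℂ (Set.range (obsMat A C)) ≤ S := by
    rw [Submodule.span_le]
    rintro _ ⟨p, rfl⟩
    exact hCA p.1 p.2
  have hF : Submodule.span ℂ (Set.range F) ≤ S := h.trans hObs
  -- row spans are equal
  have hspan : Submodule.span ℂ (Set.range (fromRows (fromRows B C) F)) = S := by
    rw [range_fromRows_span, ← hS, sup_eq_left]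
    exact hF
  rw [Matrix.rank_eq_finrank_span_row, Matrix.rank_eq_finrank_span_row]
  exact congrArg (fun s : Submodule ℂ (Fin n → ℂ) => Module.finrank ℂ s) hspan
end

section
/- Suppose, after a permutation of coordinates, A = [[A₁₁, 0],[A₂₁, A₂₂]] with A₂₂ ∈ ℝ^{(n−k)×(n−k)} diagonalizable, C = [C₁, 0], and F = [F₁, F₂]. If rank[A − λI; C; F] = rank[A − λI; C] for all λ ∈ ℂ, then F₂ = 0. -/
open Matrix

theorem F2_eq_zero_of_pbh_functional {k m q r : ℕ}
    (A11 : Matrix (Fin k) (Fin k) ℂ) (A21 : Matrix (Fin m) (Fin k) ℂ)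
    (A22 : Matrix (Fin m) (Fin m) ℂ)
    (C1 : Matrix (Fin q) (Fin k) ℂ)
    (F1 : Matrix (Fin r) (Fin k) ℂ) (F2 : Matrix (Fin r) (Fin m) ℂ)
    -- `A₂₂` is diagonalizable
    (hdiag : ∃ P D : Matrix (Fin m) (Fin m) ℂ,
      IsUnit P.det ∧ D.IsDiag ∧ A22 = P * D * P⁻¹)
    -- the PBH-type rank condition holds for all `λ`
    (hpbh : ∀ lam : ℂ,
      (fromRows
        (fromRows
          (fromBlocks A11 0 A21 A22 - lam • (1 : Matrix (Fin k ⊕ Fin m) (Fin k ⊕ Fin m) ℂ))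
          (fromCols C1 0))
        (fromCols F1 F2)).rank =
      (fromRows
        (fromBlocks A11 0 A21 A22 - lam • (1 : Matrix (Fin k ⊕ Fin m) (Fin k ⊕ Fin m) ℂ))
        (fromCols C1 0)).rank) :
    F2 = 0 := by
  obtain ⟨P, D, hP, hD, hA⟩ := hdiag
  -- Key step: for any eigenpair (lam, v) of A22, we have F2 *ᵥ v = 0.
  have key : ∀ (lam : ℂ) (v : Fin m → ℂ), A22 *ᵥ v = lam • v → F2 *ᵥ v = 0 := by
    intro lam v hv
    set B : Matrix ((Fin k ⊕ Fin m) ⊕ Fin q) (Fin k ⊕ Fin m) ℂ :=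
      fromRows
        (fromBlocks A11 0 A21 A22 - lam • (1 : Matrix (Fin k ⊕ Fin m) (Fin k ⊕ Fin m) ℂ))
        (fromCols C1 0) with hB
    set M := fromRows B (fromCols F1 F2) with hM
    -- kernels
    have hle : LinearMap.ker M.mulVecLin ≤ LinearMap.ker B.mulVecLin := by
      intro w hw
      simp only [LinearMap.mem_ker, mulVecLin_apply, hM, fromRows_mulVec] at hw ⊢
      have := congrFun hw
      funext i
      simpa using this (Sum.inl i)
    have hrank : M.rank = B.rank := hpbh lam
    have hfk : Module.finrank ℂ (LinearMap.ker M.mulVecLin) =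
        Module.finrank ℂ (LinearMap.ker B.mulVecLin) := by
      have h1 := LinearMap.finrank_range_add_finrank_ker M.mulVecLin
      have h2 := LinearMap.finrank_range_add_finrank_ker B.mulVecLin
      have : M.rank + Module.finrank ℂ (LinearMap.ker M.mulVecLin) =
          B.rank + Module.finrank ℂ (LinearMap.ker B.mulVecLin) := by
        rw [Matrix.rank, Matrix.rank, h1, h2]
      omega
    have hker : LinearMap.ker M.mulVecLin = LinearMap.ker B.mulVecLin :=
      Submodule.eq_of_le_of_finrank_eq hle hfk
    -- the vector (0, v) is in the kernel of B
    have hwB : B *ᵥ (Sum.elim 0 v) = 0 := by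
      simp only [hB, fromRows_mulVec, Matrix.sub_mulVec, Matrix.smul_mulVec,
        Matrix.one_mulVec, fromBlocks_mulVec, fromCols_mulVec_sumElim]
      funext i
      cases i with
      | inl i =>
        cases i <;> simp [hv, Matrix.mulVec_zero, Pi.smul_apply, mul_comm]
      | inr i => simp [Matrix.mulVec_zero]
    have hwM : M *ᵥ (Sum.elim 0 v) = 0 := by
      have : Sum.elim (0 : Fin k → ℂ) v ∈ LinearMap.ker B.mulVecLin := by
        simpa [LinearMap.mem_ker, mulVecLin_apply] using hwB
      rw [← hker] at this
      simpa [LinearMap.mem_ker, mulVecLin_apply] using this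
    have := congrFun hwM
    funext i
    have h := this (Sum.inr i)
    simp only [hM, fromRows_mulVec, fromCols_mulVec_sumElim, Sum.elim_inr,
      Pi.zero_apply, Pi.add_apply] at h
    simpa [Matrix.mulVec_zero] using h
  -- Now each column of P is an eigenvector of A22.
  have hAP : A22 * P = P * D := by
    rw [hA, Matrix.mul_assoc, Matrix.mul_assoc, Matrix.nonsing_inv_mul P hP, Matrix.mul_one]
  have hFP : F2 * P = 0 := by
    ext i j
    have hcol : A22 *ᵥ (fun l => P l j) = (D j j) • (fun l => P l j) := by
      funext i'
      have := congrFun (congrFun hAP i') j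
      simp only [Matrix.mul_apply] at this
      have hPD : ∑ l, P i' l * D l j = P i' j * D j j := by
        rw [Finset.sum_eq_single j]
        · intro b _ hb; rw [hD hb, mul_zero]
        · intro h; exact absurd (Finset.mem_univ j) h
      simp only [Matrix.mulVec, dotProduct]
      rw [this, hPD, Pi.smul_apply, smul_eq_mul, mul_comm]
    have := congrFun (key (D j j) (fun l => P l j) hcol) i
    simpa [Matrix.mul_apply, Matrix.mulVec, dotProduct] using this
  have := congrArg (· * P⁻¹) hFP
  simp only [Matrix.mul_assoc, Matrix.mul_nonsing_inv P hP, Matrix.mul_one,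
    Matrix.zero_mul] at this
  exact this
end

section
/- Let 𝒟 be the union of all minimal dilation sets of [A; C], partition coordinates as 𝒳₁ = complement of 𝒟 (size k) and 𝒳₂ = 𝒟. Then the submatrix of [A; C] on columns 𝒳₁ has structural rank k; consequently, if every nonzero column of F lies in 𝒳₁ (i.e., targets avoid 𝒟), then generically rank[A; C; F] = rank[A; C]. -/
open Matrix

open scoped Classical

/-- `M` is a numerical realization respecting the zero pattern `P`. -/
def Respects {α : Type*} {n : ℕ} (P : Finset (α × Fin n)) (M : Matrix α (Fin n) ℝ) : Prop :=
  ∀ i j, M i j ≠ 0 → (i, j) ∈ P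

/-- The structural (generic) rank of a zero pattern. -/
noncomputable def structRank {α : Type*} [Fintype α] {n : ℕ}
    (P : Finset (α × Fin n)) : ℕ :=
  sSup {k | ∃ M : Matrix α (Fin n) ℝ, Respects P M ∧ M.rank = k}

/-- The pattern restricted to the columns indexed by `S`. -/
def colRestrict {α : Type*} {n : ℕ} (P : Finset (α × Fin n)) (S : Finset (Fin n)) :
    Finset (α × Fin n) :=
  P.filter (fun p => p.2 ∈ S)

/-- `S` is a dilation set: the columns of `S` have nonzero entries in fewer than
`|S|` rows. -/
def IsDilation {α : Type*} [Fintype α] {n : ℕ}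
    (P : Finset (α × Fin n)) (S : Finset (Fin n)) : Prop :=
  (Finset.univ.filter (fun i : α => ∃ j ∈ S, (i, j) ∈ P)).card < S.card

/-- `S` is a minimal dilation set: `S` is a dilation and no proper subset of `S`
is a dilation. -/
def IsMinimalDilation {α : Type*} [Fintype α] {n : ℕ}
    (P : Finset (α × Fin n)) (S : Finset (Fin n)) : Prop :=
  IsDilation P S ∧ ∀ S' : Finset (Fin n), S' ⊂ S → ¬ IsDilation P S'


open Submodule Module

section Aux

variable {α : Type*} [Fintype α] {n : ℕ}

lemma rank_le_card_of_cols (M : Matrix α (Fin n) ℝ) (S : Finset (Fin n))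
    (h : ∀ x : Fin n, x ∉ S → ∀ i, M i x = 0) : M.rank ≤ S.card := by
  classical
  rw [Matrix.rank_eq_finrank_span_cols]
  have hsub : span ℝ (Set.range Mᵀ) ≤ span ℝ ((S.image (fun x => Mᵀ x) : Finset (α → ℝ)) : Set (α → ℝ)) := by
    rw [Submodule.span_le]
    rintro v ⟨x, rfl⟩
    by_cases hx : x ∈ S
    · exact Submodule.subset_span (by simp only [Finset.coe_image, Set.mem_image, Finset.mem_coe]; exact ⟨x, hx, rfl⟩)
    · have h0 : Mᵀ x = 0 := funext fun i => h x hx i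
      rw [h0]; exact Submodule.zero_mem _
  calc finrank ℝ (span ℝ (Set.range Mᵀ)) ≤ finrank ℝ (span ℝ ((S.image (fun x => Mᵀ x) : Finset (α → ℝ)) : Set (α → ℝ))) :=
        Submodule.finrank_mono hsub
    _ ≤ (S.image (fun x => Mᵀ x)).card := finrank_span_finset_le_card _
    _ ≤ S.card := Finset.card_image_le

lemma matchMatrix_row (T : Finset (Fin n)) (g : Fin n → α) (hg : Set.InjOn g ↑T)
    (M : Matrix α (Fin n) ℝ) (h0 : ∀ i x, M i x ≠ 0 → x ∈ T ∧ g x = i)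
    (h1 : ∀ x ∈ T, M (g x) x = 1) {x : Fin n} (hx : x ∈ T) :
    M (g x) = Pi.single x 1 := by
  funext y
  by_cases hyx : y = x
  · subst hyx
    rw [h1 y hx]
    simp
  · have hz : M (g x) y = 0 := by
      by_contra hne
      obtain ⟨hyT, he⟩ := h0 _ _ hne
      exact hyx (hg hyT hx he)
    rw [hz, Pi.single_eq_of_ne hyx]

lemma matchMatrix_rank (T : Finset (Fin n)) (g : Fin n → α) (hg : Set.InjOn g ↑T)
    (M : Matrix α (Fin n) ℝ) (h0 : ∀ i x, M i x ≠ 0 → x ∈ T ∧ g x = i)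
    (h1 : ∀ x ∈ T, M (g x) x = 1) :
    M.rank = T.card := by
  have hrow : ∀ x ∈ T, M (g x) = Pi.single x 1 := fun x hx => matchMatrix_row T g hg M h0 h1 hx
  have hspan : span ℝ (Set.range M) = span ℝ ((fun x : Fin n => (Pi.single x 1 : Fin n → ℝ)) '' ↑T) := by
    apply le_antisymm
    · rw [Submodule.span_le]
      rintro v ⟨i, rfl⟩
      by_cases hi : ∃ x ∈ T, g x = i
      · obtain ⟨x, hx, rfl⟩ := hi
        rw [hrow x hx]
        exact Submodule.subset_span ⟨x, hx, rfl⟩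
      · have hzr : M i = 0 := by
          funext y
          by_contra hne
          obtain ⟨hyT, he⟩ := h0 _ _ hne
          exact hi ⟨y, hyT, he⟩
        rw [hzr]; exact Submodule.zero_mem _
    · rw [Submodule.span_le]
      rintro v ⟨x, hx, rfl⟩
      exact Submodule.subset_span ⟨g x, (hrow x hx).symm ▸ rfl⟩
  rw [Matrix.rank_eq_finrank_span_row, Matrix.row, hspan, Set.image_eq_range]
  have hli : LinearIndependent ℝ (fun x : ↥(↑T : Set (Fin n)) => (Pi.single (x : Fin n) 1 : Fin n → ℝ)) := by
    have h := (Pi.basisFun ℝ (Fin n)).linearIndependent.comp ((↑) : ↥(↑T : Set (Fin n)) → Fin n) Subtype.val_injective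
    have he : (⇑(Pi.basisFun ℝ (Fin n)) ∘ (Subtype.val : ↥(↑T : Set (Fin n)) → Fin n)) = fun x : ↥(↑T : Set (Fin n)) => (Pi.single (x : Fin n) 1 : Fin n → ℝ) := by
      funext x; simp [Function.comp]
    rwa [he] at h
  rw [finrank_span_eq_card hli]
  simp

lemma exists_matching_of_rank {α : Type*} [Fintype α] {n : ℕ} (M : Matrix α (Fin n) ℝ) (g₀ : Fin n → α) :
    ∃ (T : Finset (Fin n)) (g : Fin n → α), T.card = M.rank ∧ Set.InjOn g ↑T ∧ ∀ x ∈ T, M (g x) x ≠ 0 := by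
  classical
  -- Step A : linearly independent rows spanning the row space
  obtain ⟨b, hb_sub, hb_span, hb_ind⟩ := exists_linearIndependent ℝ (Set.range M)
  haveI : Fintype ↥b := (Set.Finite.subset (Set.finite_range M) hb_sub).fintype
  have hρ : ∀ v : ↥b, ∃ i : α, M i = (v : Fin n → ℝ) := fun v => hb_sub v.2
  choose ρ hρ using hρ
  have hρinj : Function.Injective ρ := fun v w h => Subtype.ext (by rw [← hρ v, ← hρ w, h])
  have hcardb : Fintype.card ↥b = M.rank := by
    rw [Matrix.rank_eq_finrank_span_row, Matrix.row, ← hb_span, finrank_span_set_eq_card hb_ind,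
      Set.toFinset_card]
  set A : Matrix ↥b (Fin n) ℝ := fun v => (v : Fin n → ℝ) with hA
  have hA_ind : LinearIndependent ℝ A := hb_ind
  have hA_rank : A.rank = M.rank := by
    rw [hA_ind.rank_matrix, hcardb]
  -- Step B : linearly independent columns of A
  obtain ⟨c, hc_sub, hc_span, hc_ind⟩ := exists_linearIndependent ℝ (Set.range Aᵀ)
  haveI : Fintype ↥c := (Set.Finite.subset (Set.finite_range Aᵀ) hc_sub).fintype
  have hγ : ∀ w : ↥c, ∃ x : Fin n, Aᵀ x = (w : ↥b → ℝ) := fun w => hc_sub w.2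
  choose γ hγ using hγ
  have hγinj : Function.Injective γ := fun w w' h => Subtype.ext (by rw [← hγ w, ← hγ w', h])
  have hcardc : Fintype.card ↥c = M.rank := by
    rw [← hA_rank, Matrix.rank_eq_finrank_span_cols, Matrix.col, ← hc_span, finrank_span_set_eq_card hc_ind,
      Set.toFinset_card]
  -- Step C : square invertible submatrix
  have hce : Fintype.card ↥c = Fintype.card ↥b := by rw [hcardc, hcardb]
  let e : ↥c ≃ ↥b := Fintype.equivOfCardEq hce
  set B : Matrix ↥c ↥c ℝ := fun w w' => (w : ↥b → ℝ) (e w') with hB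
  have hB_ind : LinearIndependent ℝ (fun w : ↥c => B w) := by
    have hker : LinearMap.ker (LinearMap.funLeft ℝ ℝ e) = ⊥ :=
      LinearMap.ker_eq_bot.mpr (LinearMap.funLeft_injective_of_surjective ℝ ℝ e e.surjective)
    have hmap := hc_ind.map' (LinearMap.funLeft ℝ ℝ e) hker
    exact hmap
  have hB_unit : IsUnit B := Matrix.linearIndependent_rows_iff_isUnit.mp hB_ind
  have hdet : B.det ≠ 0 := by
    have := (Matrix.isUnit_iff_isUnit_det B).mp hB_unit
    exact this.ne_zero
  have hσ : ∃ σ : Equiv.Perm ↥c, ∏ w, B (σ w) w ≠ 0 := by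
    by_contra h
    push_neg at h
    apply hdet
    rw [Matrix.det_apply]
    exact Finset.sum_eq_zero fun σ _ => by rw [h σ, smul_zero]
  obtain ⟨σ, hσ⟩ := hσ
  -- Step D : assemble the matching
  set φ : ↥c → Fin n := fun w => γ (σ w) with hφ
  have hφinj : Function.Injective φ := hγinj.comp σ.injective
  set ψ : ↥c → α := fun w => ρ (e w) with hψ
  have hψinj : Function.Injective ψ := hρinj.comp e.injective
  have hentry : ∀ w : ↥c, M (ψ w) (φ w) ≠ 0 := by
    intro w hzero
    apply hσ
    apply Finset.prod_eq_zero (Finset.mem_univ w)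
    have h1 : B (σ w) w = ((σ w : ↥c) : ↥b → ℝ) (e w) := rfl
    have h2 : ((σ w : ↥c) : ↥b → ℝ) = Aᵀ (γ (σ w)) := (hγ (σ w)).symm
    have h3 : Aᵀ (γ (σ w)) (e w) = A (e w) (φ w) := rfl
    have h4 : A (e w) (φ w) = M (ρ (e w)) (φ w) := by rw [hA, hρ (e w)]
    rw [h1, h2, h3, h4]
    exact hzero
  refine ⟨Finset.image φ Finset.univ,
    fun x => if h : ∃ w, φ w = x then ψ (Classical.choose h) else g₀ x, ?_, ?_, ?_⟩
  · rw [Finset.card_image_of_injective _ hφinj, Finset.card_univ, hcardc]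
  · intro x hx y hy hxy
    simp only [Finset.coe_image, Set.mem_image, Finset.mem_coe] at hx hy
    obtain ⟨w, -, rfl⟩ := hx
    obtain ⟨w', -, rfl⟩ := hy
    have h1 : ∃ u, φ u = φ w := ⟨w, rfl⟩
    have h2 : ∃ u, φ u = φ w' := ⟨w', rfl⟩
    simp only [dif_pos h1, dif_pos h2] at hxy
    have := hψinj hxy
    rw [← Classical.choose_spec h1, ← Classical.choose_spec h2, this]
  · intro x hx
    simp only [Finset.mem_image, Finset.mem_univ, true_and] at hx
    obtain ⟨w, rfl⟩ := hx
    have h1 : ∃ u, φ u = φ w := ⟨w, rfl⟩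
    simp only [dif_pos h1]
    have hcw := Classical.choose_spec h1
    have h2 := hentry (Classical.choose h1)
    rwa [hcw] at h2


lemma augment_lemma {α : Type*} [Fintype α] {n : ℕ} {P : Finset (α × Fin n)}
    {j : Fin n} {T : Finset (Fin n)} (hj : j ∉ T) :
    ∀ (m : ℕ) (g : Fin n → α), Set.InjOn g ↑T → (∀ x ∈ T, (g x, x) ∈ P) →
    ∀ p : ℕ → Fin n, p 0 = j → (∀ t, 0 < t → t ≤ m → p t ∈ T) →
    Set.InjOn p {t | t ≤ m} → (∀ t, t < m → (g (p (t + 1)), p t) ∈ P) →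
    ∀ i : α, (∀ x ∈ T, g x ≠ i) → (i, p m) ∈ P →
    ∃ (T' : Finset (Fin n)) (g' : Fin n → α),
      Set.InjOn g' ↑T' ∧ (∀ x ∈ T', (g' x, x) ∈ P) ∧ T'.card = T.card + 1 := by
  intro m
  induction m with
  | zero =>
    intro g hginj hgP p hp0 _ _ _ i hi hiP
    refine ⟨insert j T, Function.update g j i, ?_, ?_, ?_⟩
    · intro x hx y hy hxy
      simp only [Finset.coe_insert, Set.mem_insert_iff, Finset.mem_coe] at hx hy
      rcases hx with rfl | hx <;> rcases hy with rfl | hy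
      · rfl
      · rw [Function.update_self, Function.update_of_ne (fun h => hj (by rw [← h]; exact hy))] at hxy
        exact absurd hxy.symm (hi y hy)
      · rw [Function.update_self, Function.update_of_ne (fun h => hj (by rw [← h]; exact hx))] at hxy
        exact absurd hxy (hi x hx)
      · rw [Function.update_of_ne (fun h => hj (by rw [← h]; exact hx)),
          Function.update_of_ne (fun h => hj (by rw [← h]; exact hy))] at hxy
        exact hginj hx hy hxy
    · intro x hx
      rcases Finset.mem_insert.mp hx with rfl | hx
      · rw [Function.update_self]; rwa [hp0] at hiP
      · rw [Function.update_of_ne (fun h => hj (by rw [← h]; exact hx))]; exact hgP x hx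
    · rw [Finset.card_insert_of_notMem hj]
  | succ m ih =>
    intro g hginj hgP p hp0 hpT hpinj hedge i hi hiP
    have hjm : p (m + 1) ∈ T := hpT (m + 1) (Nat.succ_pos m) le_rfl
    set j' := p (m + 1) with hj'
    set g₁ := Function.update g j' i with hg₁
    have hg₁inj : Set.InjOn g₁ ↑T := by
      intro x hx y hy hxy
      by_cases hxj : x = j' <;> by_cases hyj : y = j'
      · rw [hxj, hyj]
      · rw [hg₁] at hxy
        rw [hxj, Function.update_self, Function.update_of_ne hyj] at hxy
        exact absurd hxy.symm (hi y hy)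
      · rw [hg₁] at hxy
        rw [hyj, Function.update_self, Function.update_of_ne hxj] at hxy
        exact absurd hxy (hi x hx)
      · rw [hg₁] at hxy
        rw [Function.update_of_ne hxj, Function.update_of_ne hyj] at hxy
        exact hginj hx hy hxy
    have hg₁P : ∀ x ∈ T, (g₁ x, x) ∈ P := by
      intro x hx
      by_cases hxj : x = j'
      · rw [hg₁, hxj, Function.update_self]; exact hiP
      · rw [hg₁, Function.update_of_ne hxj]; exact hgP x hx
    have hne : ∀ t, t ≤ m → p t ≠ j' := by
      intro t ht h
      have : t = m + 1 := hpinj (by simp only [Set.mem_setOf_eq]; omega)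
        (by simp only [Set.mem_setOf_eq]; omega) h
      omega
    have hi₀ : ∀ x ∈ T, g₁ x ≠ g j' := by
      intro x hx
      by_cases hxj : x = j'
      · rw [hg₁, hxj, Function.update_self]
        exact fun h => hi j' hjm h.symm
      · rw [hg₁, Function.update_of_ne hxj]
        exact fun h => hxj (hginj hx hjm h)
    refine ih g₁ hg₁inj hg₁P p hp0 (fun t ht1 ht2 => hpT t ht1 (by omega)) ?_ ?_ (g j') hi₀ ?_
    · exact hpinj.mono (fun t ht => by simp only [Set.mem_setOf_eq] at *; omega)
    · intro t ht
      rw [hg₁, Function.update_of_ne (hne (t + 1) (by omega))]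
      exact hedge t (by omega)
    · have := hedge m (by omega)
      exact this

lemma exposed_mem_minimalDilation {α : Type*} [Fintype α] {n : ℕ} (P : Finset (α × Fin n))
    (T : Finset (Fin n)) (g : Fin n → α) (hginj : Set.InjOn g ↑T)
    (hgP : ∀ x ∈ T, (g x, x) ∈ P)
    (hmax : ∀ (T' : Finset (Fin n)) (g' : Fin n → α),
      Set.InjOn g' ↑T' → (∀ x ∈ T', (g' x, x) ∈ P) → T'.card ≤ T.card)
    (j : Fin n) (hj : j ∉ T) :
    ∃ S : Finset (Fin n), IsMinimalDilation P S ∧ j ∈ S := by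
  classical
  set Reach : Fin n → Prop := fun j' => ∃ (m : ℕ) (p : ℕ → Fin n), p 0 = j ∧
    (∀ t, 0 < t → t ≤ m → p t ∈ T) ∧ Set.InjOn p {t | t ≤ m} ∧
    (∀ t, t < m → (g (p (t + 1)), p t) ∈ P) ∧ p m = j' with hReach
  have hjR : Reach j := by
    refine ⟨0, fun _ => j, rfl, fun t h1 h2 => by omega, ?_, fun t ht => by omega, rfl⟩
    intro a ha b hb _
    simp only [Set.mem_setOf_eq, Nat.le_zero] at ha hb
    rw [ha, hb]
  have hRT : ∀ j', Reach j' → j' ≠ j → j' ∈ T := by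
    rintro j' ⟨m, p, hp0, hpT, hpinj, hedge, hpm⟩ hne
    rcases Nat.eq_zero_or_pos m with rfl | hm
    · exact absurd (hpm.symm.trans hp0) hne
    · exact hpm ▸ hpT m hm le_rfl
  have hclose : ∀ j₁, Reach j₁ → ∀ i : α, (i, j₁) ∈ P → ∃ x, x ∈ T ∧ g x = i ∧ Reach x := by
    rintro j₁ ⟨m, p, hp0, hpT, hpinj, hedge, hpm⟩ i hiP
    by_cases hmatched : ∃ x ∈ T, g x = i
    · obtain ⟨x, hxT, hgx⟩ := hmatched
      refine ⟨x, hxT, hgx, ?_⟩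
      by_cases hvis : ∃ t ≤ m, p t = x
      · obtain ⟨t₀, ht₀, hpt₀⟩ := hvis
        exact ⟨t₀, p, hp0, fun t h1 h2 => hpT t h1 (h2.trans ht₀),
          hpinj.mono (fun u hu => hu.trans ht₀),
          fun t ht => hedge t (ht.trans_le ht₀), hpt₀⟩
      · push_neg at hvis
        set p' : ℕ → Fin n := fun t => if t = m + 1 then x else p t with hp'def
        have hp'eq : ∀ t, p' t = if t = m + 1 then x else p t := fun t => rfl
        refine ⟨m + 1, p', ?_, ?_, ?_, ?_, ?_⟩
        · rw [hp'eq, if_neg (by omega : ¬ (0:ℕ) = m + 1)]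
          exact hp0
        · intro t h1 h2
          rw [hp'eq]
          by_cases ht : t = m + 1
          · rw [if_pos ht]; exact hxT
          · rw [if_neg ht]; exact hpT t h1 (by omega)
        · intro a ha b hb hab
          simp only [Set.mem_setOf_eq] at ha hb
          rw [hp'eq a, hp'eq b] at hab
          by_cases hA : a = m + 1 <;> by_cases hB : b = m + 1
          · rw [hA, hB]
          · rw [if_pos hA, if_neg hB] at hab
            exact absurd hab.symm (hvis b (by omega))
          · rw [if_neg hA, if_pos hB] at hab
            exact absurd hab (hvis a (by omega))
          · rw [if_neg hA, if_neg hB] at hab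
            exact hpinj (by simp only [Set.mem_setOf_eq]; omega)
              (by simp only [Set.mem_setOf_eq]; omega) hab
        · intro t ht
          rw [hp'eq (t + 1), hp'eq t, if_neg (by omega : ¬ t = m + 1)]
          by_cases htm : t = m
          · rw [if_pos (by omega : t + 1 = m + 1), hgx, htm, hpm]
            exact hiP
          · rw [if_neg (by omega : ¬ t + 1 = m + 1)]
            exact hedge t (by omega)
        · rw [hp'eq, if_pos rfl]
    · push_neg at hmatched
      exfalso
      obtain ⟨T', g', hinj', hP', hcard'⟩ :=
        augment_lemma hj m g hginj hgP p hp0 hpT hpinj hedge i hmatched (hpm ▸ hiP)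
      have := hmax T' g' hinj' hP'
      omega
  set S : Finset (Fin n) := Finset.univ.filter Reach with hS
  have hjS : j ∈ S := Finset.mem_filter.mpr ⟨Finset.mem_univ _, hjR⟩
  have hSmem : ∀ x, x ∈ S ↔ Reach x := fun x => by
    simp only [hS, Finset.mem_filter, Finset.mem_univ, true_and]
  have hSdil : IsDilation P S := by
    unfold IsDilation
    have hrow : ∀ i ∈ Finset.univ.filter (fun i : α => ∃ j'' ∈ S, (i, j'') ∈ P),
        ∃ x, x ∈ T ∧ g x = i ∧ Reach x := by
      intro i hi
      simp only [Finset.mem_filter, Finset.mem_univ, true_and] at hi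
      obtain ⟨j'', hj''S, hj''P⟩ := hi
      exact hclose j'' ((hSmem j'').mp hj''S) i hj''P
    have hinj : ∀ i ∈ Finset.univ.filter (fun i : α => ∃ j'' ∈ S, (i, j'') ∈ P),
        (fun i => if h : ∃ x, x ∈ T ∧ g x = i ∧ Reach x then Classical.choose h else j) i ∈ S.erase j := by
      intro i hi
      obtain ⟨x, hxT, hgx, hxR⟩ := hrow i hi
      have hex : ∃ x, x ∈ T ∧ g x = i ∧ Reach x := ⟨x, hxT, hgx, hxR⟩
      simp only [dif_pos hex]
      obtain ⟨hT', hg', hR'⟩ := Classical.choose_spec hex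
      exact Finset.mem_erase.mpr ⟨fun h => hj (h ▸ hT'), (hSmem _).mpr hR'⟩
    have hcard := Finset.card_le_card_of_injOn _ hinj ?_
    · calc (Finset.univ.filter (fun i : α => ∃ j'' ∈ S, (i, j'') ∈ P)).card
          ≤ (S.erase j).card := hcard
        _ < S.card := Finset.card_erase_lt_of_mem hjS
    · intro i hi i' hi' heq
      obtain ⟨x, hxT, hgx, hxR⟩ := hrow i hi
      obtain ⟨x', hxT', hgx', hxR'⟩ := hrow i' hi'
      have hex : ∃ x, x ∈ T ∧ g x = i ∧ Reach x := ⟨x, hxT, hgx, hxR⟩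
      have hex' : ∃ x, x ∈ T ∧ g x = i' ∧ Reach x := ⟨x', hxT', hgx', hxR'⟩
      simp only [dif_pos hex, dif_pos hex'] at heq
      obtain ⟨hT1, hg1, -⟩ := Classical.choose_spec hex
      obtain ⟨hT2, hg2, -⟩ := Classical.choose_spec hex'
      rw [← hg1, ← hg2, heq]
  have hsub_nondil : ∀ S' : Finset (Fin n), S' ⊆ S → j ∉ S' → ¬ IsDilation P S' := by
    intro S' hS'S hjS' hdil
    unfold IsDilation at hdil
    have hS'T : ∀ x ∈ S', x ∈ T := by
      intro x hx
      exact hRT x ((hSmem x).mp (hS'S hx)) (fun h => hjS' (h ▸ hx))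
    have : S'.card ≤ (Finset.univ.filter (fun i : α => ∃ j'' ∈ S', (i, j'') ∈ P)).card := by
      apply Finset.card_le_card_of_injOn g
      · intro x hx
        simp only [Finset.coe_filter, Finset.mem_univ, true_and, Set.mem_setOf_eq]
        exact ⟨x, hx, hgP x (hS'T x hx)⟩
      · intro x hx y hy hxy
        exact hginj (hS'T x hx) (hS'T y hy) hxy
    omega
  set Cs : Set ℕ := {c | ∃ S₀ : Finset (Fin n), S₀ ⊆ S ∧ j ∈ S₀ ∧ IsDilation P S₀ ∧ S₀.card = c}
    with hCs
  have hCsne : Cs.Nonempty := ⟨S.card, S, Finset.Subset.refl S, hjS, hSdil, rfl⟩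
  obtain ⟨S₀, hS₀S, hjS₀, hS₀dil, hS₀card⟩ := Nat.sInf_mem hCsne
  refine ⟨S₀, ⟨hS₀dil, ?_⟩, hjS₀⟩
  intro S' hS'sub hdil'
  by_cases hjmem : j ∈ S'
  · have h1 : sInf Cs ≤ S'.card :=
      Nat.sInf_le ⟨S', hS'sub.subset.trans hS₀S, hjmem, hdil', rfl⟩
    have h2 : S'.card < S₀.card := Finset.card_lt_card hS'sub
    omega
  · exact hsub_nondil S' (hS'sub.subset.trans hS₀S) hjmem hdil'

lemma dilation_contains_minimal {α : Type*} [Fintype α] {n : ℕ} (P : Finset (α × Fin n)) :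
    ∀ S : Finset (Fin n), IsDilation P S → ∃ S' ⊆ S, IsMinimalDilation P S' := by
  intro S
  induction S using Finset.strongInduction with
  | _ S ih =>
    intro h
    by_cases hmin : ∀ S' ⊂ S, ¬ IsDilation P S'
    · exact ⟨S, Finset.Subset.refl S, h, hmin⟩
    · push_neg at hmin
      obtain ⟨S', hS'sub, hS'dil⟩ := hmin
      obtain ⟨S'', h1, h2⟩ := ih S' hS'sub hS'dil
      exact ⟨S'', h1.trans hS'sub.subset, h2⟩

lemma hall_cover {n q : ℕ} (P : Finset ((Fin n ⊕ Fin q) × Fin n)) (X : Finset (Fin n))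
    (h : ∀ S ⊆ X, ¬ IsDilation P S) :
    ∃ g : Fin n → Fin n ⊕ Fin q, Set.InjOn g ↑X ∧ ∀ x ∈ X, (g x, x) ∈ P := by
  classical
  set t : ↥X → Finset (Fin n ⊕ Fin q) :=
    fun x => Finset.univ.filter (fun i => (i, (x : Fin n)) ∈ P) with ht
  have hhall : ∀ s : Finset ↥X, s.card ≤ (s.biUnion t).card := by
    intro s
    set S := s.image (Subtype.val) with hSdef
    have hcardS : S.card = s.card := Finset.card_image_of_injective _ Subtype.val_injective
    have hSX : S ⊆ X := by
      intro x hx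
      simp only [hSdef, Finset.mem_image] at hx
      obtain ⟨y, -, rfl⟩ := hx
      exact y.2
    have hnd := h S hSX
    unfold IsDilation at hnd
    push_neg at hnd
    refine (hcardS ▸ hnd).trans (Finset.card_le_card ?_)
    intro i hi
    simp only [Finset.mem_filter] at hi
    obtain ⟨-, j', hj'S, hP⟩ := hi
    simp only [hSdef, Finset.mem_image] at hj'S
    obtain ⟨y, hy, rfl⟩ := hj'S
    simp only [Finset.mem_biUnion]
    exact ⟨y, hy, by simp [ht, hP]⟩
  obtain ⟨f, hfinj, hft⟩ := (Finset.all_card_le_biUnion_card_iff_exists_injective t).mp hhall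
  refine ⟨fun x => if h : x ∈ X then f ⟨x, h⟩ else Sum.inl x, ?_, ?_⟩
  · intro x hx y hy hxy
    simp only [Finset.mem_coe] at hx hy
    simp only [dif_pos hx, dif_pos hy] at hxy
    have := hfinj hxy
    exact congrArg Subtype.val this
  · intro x hx
    simp only [dif_pos hx]
    have := hft ⟨x, hx⟩
    simpa [ht] using this

lemma rank_fromRows_eq {m₁ : Type*} [Fintype m₁] {r n : ℕ} (M : Matrix m₁ (Fin n) ℝ)
    (F : Matrix (Fin r) (Fin n) ℝ)
    (h : ∀ l, F l ∈ Submodule.span ℝ (Set.range M)) :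
    (Matrix.fromRows M F).rank = M.rank := by
  rw [Matrix.rank_eq_finrank_span_row, Matrix.rank_eq_finrank_span_row]
  have hr : Set.range (Matrix.fromRows M F) = Set.range M ∪ Set.range F := by
    ext v
    constructor
    · rintro ⟨i | l, rfl⟩
      · exact Or.inl ⟨i, rfl⟩
      · exact Or.inr ⟨l, rfl⟩
    · rintro (⟨i, rfl⟩ | ⟨l, rfl⟩)
      · exact ⟨Sum.inl i, rfl⟩
      · exact ⟨Sum.inr l, rfl⟩
  rw [Matrix.row, Matrix.row, hr, Submodule.span_union, sup_eq_left.mpr]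
  rw [Submodule.span_le]
  rintro v ⟨l, rfl⟩
  exact h l

lemma structRank_bddAbove {α : Type*} [Fintype α] {n : ℕ} (P : Finset (α × Fin n)) :
    BddAbove {k | ∃ M : Matrix α (Fin n) ℝ, Respects P M ∧ M.rank = k} := by
  refine ⟨n, ?_⟩
  rintro k ⟨M, -, rfl⟩
  simpa using M.rank_le_card_width

lemma structRank_set_nonempty {α : Type*} [Fintype α] {n : ℕ} (P : Finset (α × Fin n)) :
    (0 : ℕ) ∈ {k | ∃ M : Matrix α (Fin n) ℝ, Respects P M ∧ M.rank = k} :=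
  ⟨0, fun i j h => absurd rfl h, Matrix.rank_zero⟩


end Aux

theorem generic_rank_preserved_when_targets_avoid_dilations {n q r : ℕ}
    (P : Finset ((Fin n ⊕ Fin q) × Fin n))  -- zero pattern of the stacked matrix [A; C]
    (F : Matrix (Fin r) (Fin n) ℝ) :
    -- `D` is the union of all minimal dilation sets
    let D : Finset (Fin n) :=
      Finset.univ.filter (fun j => ∃ S : Finset (Fin n), IsMinimalDilation P S ∧ j ∈ S)
    -- the columns avoiding `D` have full structural rank
    structRank (colRestrict P (Finset.univ \ D)) = (Finset.univ \ D).card ∧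
    -- if every row of `F` has exactly one nonzero entry, in a column avoiding `D`,
    -- then generically `rank [A; C; F] = rank [A; C]`
    ((∀ l : Fin r, ∃ j : Fin n, j ∉ D ∧ F l j ≠ 0 ∧ ∀ j' : Fin n, j' ≠ j → F l j' = 0) →
      ∃ M : Matrix (Fin n ⊕ Fin q) (Fin n) ℝ,
        Respects P M ∧ M.rank = structRank P ∧ (fromRows M F).rank = M.rank) := by
  classical
  intro D
  have hD : ∀ x : Fin n, x ∈ D ↔ ∃ S : Finset (Fin n), IsMinimalDilation P S ∧ x ∈ S := by
    intro x
    simp only [D, Finset.mem_filter, Finset.mem_univ, true_and]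
  set X : Finset (Fin n) := Finset.univ \ D with hX
  have hnd : ∀ S ⊆ X, ¬ IsDilation P S := by
    intro S hSX hdil
    obtain ⟨S', hS'S, hS'min⟩ := dilation_contains_minimal P S hdil
    have hpos : 0 < S'.card := by
      have hd := hS'min.1
      unfold IsDilation at hd
      omega
    obtain ⟨x, hx⟩ := Finset.card_pos.mp hpos
    have hxX : x ∈ X := hSX (hS'S hx)
    have hxD : x ∈ D := (hD x).mpr ⟨S', hS'min, hx⟩
    rw [hX, Finset.mem_sdiff] at hxX
    exact hxX.2 hxD
  obtain ⟨g, hginj, hgP⟩ := hall_cover P X hnd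
  constructor
  · -- Part 1
    set Q := colRestrict P X with hQ
    set N : Matrix (Fin n ⊕ Fin q) (Fin n) ℝ :=
      Matrix.of (fun i x => if x ∈ X ∧ g x = i then (1:ℝ) else 0) with hN
    have hN0 : ∀ i x, N i x ≠ 0 → x ∈ X ∧ g x = i := by
      intro i x hne
      by_contra hcon
      exact hne (by simp [hN, hcon])
    have hN1 : ∀ x ∈ X, N (g x) x = 1 := by
      intro x hx
      simp [hN, hx]
    have hNrank : N.rank = X.card := matchMatrix_rank X g hginj N hN0 hN1
    have hNresp : Respects Q N := by
      intro i x hne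
      obtain ⟨h1, rfl⟩ := hN0 i x hne
      simp only [hQ, colRestrict, Finset.mem_filter]
      exact ⟨hgP x h1, h1⟩
    apply le_antisymm
    · apply csSup_le ⟨0, structRank_set_nonempty Q⟩
      rintro k ⟨M', hM', rfl⟩
      apply rank_le_card_of_cols M' X
      intro x hxX i
      by_contra hne
      have hmem := hM' i x hne
      simp only [hQ, colRestrict, Finset.mem_filter] at hmem
      exact hxX hmem.2
    · exact le_csSup (structRank_bddAbove Q) ⟨N, hNresp, hNrank⟩
  · -- Part 2
    intro hF
    set mset : Set ℕ := {c | ∃ (T : Finset (Fin n)) (g' : Fin n → Fin n ⊕ Fin q),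
      Set.InjOn g' ↑T ∧ (∀ x ∈ T, (g' x, x) ∈ P) ∧ T.card = c} with hmset
    have hmne : mset.Nonempty :=
      ⟨0, ∅, fun x => Sum.inl x, by simp, fun x hx => absurd hx (Finset.notMem_empty x),
        Finset.card_empty⟩
    have hmbdd : BddAbove mset := by
      refine ⟨n, ?_⟩
      rintro c ⟨T, g', -, -, rfl⟩
      simpa using Finset.card_le_univ T
    obtain ⟨T, gm, hgminj, hgmP, hTcard⟩ := Nat.sSup_mem hmne hmbdd
    have hmax : ∀ (T' : Finset (Fin n)) (g' : Fin n → Fin n ⊕ Fin q),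
        Set.InjOn g' ↑T' → (∀ x ∈ T', (g' x, x) ∈ P) → T'.card ≤ T.card := by
      intro T' g' h1 h2
      have hmem : T'.card ∈ mset := ⟨T', g', h1, h2, rfl⟩
      rw [hTcard]
      exact le_csSup hmbdd hmem
    have hcov : ∀ x : Fin n, x ∉ D → x ∈ T := by
      intro x hxD
      by_contra hxT
      obtain ⟨S, hSmin, hxS⟩ := exposed_mem_minimalDilation P T gm hgminj hgmP hmax x hxT
      exact hxD ((hD x).mpr ⟨S, hSmin, hxS⟩)
    set M : Matrix (Fin n ⊕ Fin q) (Fin n) ℝ :=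
      Matrix.of (fun i x => if x ∈ T ∧ gm x = i then (1:ℝ) else 0) with hM
    have hM0 : ∀ i x, M i x ≠ 0 → x ∈ T ∧ gm x = i := by
      intro i x hne
      by_contra hcon
      exact hne (by simp [hM, hcon])
    have hM1 : ∀ x ∈ T, M (gm x) x = 1 := by
      intro x hx
      simp [hM, hx]
    have hMrank : M.rank = T.card := matchMatrix_rank T gm hgminj M hM0 hM1
    have hMresp : Respects P M := by
      intro i x hne
      obtain ⟨h1, rfl⟩ := hM0 i x hne
      exact hgmP x h1
    have hMrow : ∀ x ∈ T, M (gm x) = Pi.single x 1 :=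
      fun x hx => matchMatrix_row T gm hgminj M hM0 hM1 hx
    have hsr : structRank P = T.card := by
      apply le_antisymm
      · apply csSup_le ⟨0, structRank_set_nonempty P⟩
        rintro k ⟨M', hM', rfl⟩
        obtain ⟨T', g', hc, hinj, hne⟩ := exists_matching_of_rank M' (fun x => Sum.inl x)
        have hedges : ∀ x ∈ T', (g' x, x) ∈ P := fun x hx => hM' _ _ (hne x hx)
        rw [← hc]
        exact hmax T' g' hinj hedges
      · exact le_csSup (structRank_bddAbove P) ⟨M, hMresp, hMrank⟩
    refine ⟨M, hMresp, by rw [hMrank, hsr], ?_⟩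
    apply rank_fromRows_eq
    intro l
    obtain ⟨jl, hjlD, hjlne, hjl0⟩ := hF l
    have hjlT : jl ∈ T := hcov jl hjlD
    have hFrow : F l = F l jl • M (gm jl) := by
      rw [hMrow jl hjlT]
      funext y
      by_cases hy : y = jl
      · subst hy; simp
      · simp [hjl0 y hy, Pi.single_apply, hy]
    rw [hFrow]
    exact Submodule.smul_mem _ _ (Submodule.subset_span ⟨gm jl, rfl⟩)
end
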